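/- Let m, n ≥ 1. The map sending a functor F : Paths C_m ⥤ Paths C_n to the pair (φ, L), where φ : ZMod m → ZMod n is the action of F on objects (= vertices) and L : ZMod m → ℕ is defined by L v = length (F.map e_v), is a bijection from the set of functors Paths C_m ⥤ Paths C_n onto the set of pairs (φ : ZMod m → ZMod n, L : ZMod m → ℕ) satisfying (L v : ZMod n) = φ (v + 1) - φ v for every v : ZMod m. -/

import Mathlib

open CategoryTheory

/-- The cyclic quiver `C n`: vertex set `ZMod n`, with exactly one arrow `v ⟶ v + 1` for each
vertex `v`, and no other arrows. -/
abbrev CyclicQuiver (n : ℕ) := ZMod n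

instance (n : ℕ) : Quiver (CyclicQuiver n) :=
  ⟨fun a b => PLift (b = a + 1)⟩

/-- The unique arrow `e_v : v ⟶ v + 1` of the cyclic quiver. -/
def cyclicArrow (n : ℕ) (v : CyclicQuiver n) : v ⟶ (v + 1 : ZMod n) := ⟨rfl⟩

/-- The identity, viewed as a map from objects of the path category back to vertices. -/
def toV {V : Type*} : Paths V → V := id

lemma cyclic_len {n : ℕ} {a b : CyclicQuiver n} (p : Quiver.Path a b) :
    (p.length : ZMod n) = b - a := by
  induction p with
  | nil => simp
  | cons q e ih =>
    obtain ⟨he⟩ := e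
    subst he
    simp only [Quiver.Path.length_cons, Nat.cast_add, Nat.cast_one, ih]
    ring

lemma cyclic_cast_len {n : ℕ} {a b a' b' : CyclicQuiver n} (hu : a = a') (hv : b = b')
    (p : Quiver.Path a b) : (p.cast hu hv).length = p.length := by
  subst hu; subst hv; rw [Quiver.Path.cast_rfl_rfl]

lemma cyclic_path_unique {n : ℕ} {a b : CyclicQuiver n} (p q : Quiver.Path a b)
    (h : p.length = q.length) : p = q := by
  induction p with
  | nil =>
    cases q with
    | nil => rfl
    | cons q' f => simp at h
  | cons p' e ih =>
    cases q with
    | nil => simp at h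
    | cons q' f =>
      obtain ⟨he⟩ := e
      obtain ⟨hf⟩ := f
      have hcd := add_right_cancel (he.symm.trans hf)
      subst hcd
      simp only [Quiver.Path.length_cons, Nat.add_right_cancel_iff] at h
      rw [ih q' h]

/-- The path of length `k` from `a` in the cyclic quiver. -/
def longPath {n : ℕ} (a : CyclicQuiver n) : (k : ℕ) → Quiver.Path a (a + (k : ZMod n))
  | 0 => (Quiver.Path.nil : Quiver.Path a a).cast rfl (by simp)
  | k + 1 => ((longPath a k).cons ⟨rfl⟩).cast rfl (by push_cast; ring)

lemma longPath_length {n : ℕ} (a : CyclicQuiver n) (k : ℕ) : (longPath a k).length = k := by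
  induction k with
  | zero => simp [longPath, cyclic_cast_len]
  | succ k ih => simp [longPath, cyclic_cast_len, ih]

lemma len_eqToHom_comp {V : Type*} [Quiver V] {X Y X' Y' : Paths V}
    (h : X' = X) (h' : Y = Y') (p : X ⟶ Y) :
    (eqToHom h ≫ p ≫ eqToHom h').length = Quiver.Path.length p := by
  subst h; subst h'; simp

theorem stmt_10 (m n : ℕ) (hm : 1 ≤ m) (hn : 1 ≤ n) :
    (∀ F : Paths (CyclicQuiver m) ⥤ Paths (CyclicQuiver n), ∀ v : ZMod m,
      (((Quiver.Path.length (F.map ((Paths.of _).map (cyclicArrow m v)))) : ZMod n))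
        = toV (F.obj ((Paths.of _).obj (v + 1))) - toV (F.obj ((Paths.of _).obj v))) ∧
    Function.Injective
      (fun F : Paths (CyclicQuiver m) ⥤ Paths (CyclicQuiver n) =>
        ((fun v : ZMod m => toV (F.obj ((Paths.of _).obj v)),
          fun v : ZMod m => Quiver.Path.length (F.map ((Paths.of _).map (cyclicArrow m v))))
          : (ZMod m → ZMod n) × (ZMod m → ℕ))) ∧
    (∀ (φ : ZMod m → ZMod n) (L : ZMod m → ℕ),
      (∀ v : ZMod m, ((L v : ZMod n)) = φ (v + 1) - φ v) →
      ∃ F : Paths (CyclicQuiver m) ⥤ Paths (CyclicQuiver n),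
        (∀ v : ZMod m, toV (F.obj ((Paths.of _).obj v)) = φ v) ∧
        (∀ v : ZMod m,
          Quiver.Path.length (F.map ((Paths.of _).map (cyclicArrow m v))) = L v)) := by
  refine ⟨?_, ?_, ?_⟩
  · intro F v
    exact cyclic_len (F.map ((Paths.of _).map (cyclicArrow m v)))
  · intro F G h
    simp only [Prod.mk.injEq] at h
    obtain ⟨hobj, hlen⟩ := h
    have hobj' : F.obj = G.obj := funext fun x => congrFun hobj x
    apply Paths.ext_functor hobj'
    intro a b e
    obtain ⟨he⟩ := e
    subst he
    have he' : (⟨rfl⟩ : a ⟶ (a + 1 : ZMod m)) = cyclicArrow m a := rfl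
    rw [he']
    have hFG : F.map ((Paths.of _).map (cyclicArrow m a)) =
        eqToHom (congr_fun hobj' _) ≫ G.map ((Paths.of _).map (cyclicArrow m a)) ≫
          eqToHom (congr_fun hobj'.symm _) := by
      have h1 := congrFun hobj' ((Paths.of _).obj a)
      have h2 := congrFun hobj' ((Paths.of _).obj (a + 1))
      apply cyclic_path_unique
      rw [len_eqToHom_comp]
      exact congrFun hlen a
    exact hFG
  · intro φ L hcond
    let P : CyclicQuiver m ⥤q Paths (CyclicQuiver n) :=
      { obj := φ
        map := fun {a b} e =>
          (longPath (φ a) (L a)).cast rfl (by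
            obtain ⟨he⟩ := e
            subst he
            have := hcond a
            rw [this]; ring) }
    refine ⟨Paths.lift P, fun v => rfl, fun v => ?_⟩
    have : (Paths.of _).map (cyclicArrow m v) = (cyclicArrow m v).toPath := rfl
    rw [this]; erw [Paths.lift_toPath]
    show ((longPath (φ v) (L v)).cast rfl _).length = L v
    erw [cyclic_cast_len, longPath_length]
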